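/- Let Φ be symmetric n×n and X n×(d+1) of full rank with α'Φα > 0 for all nonzero α ∈ ker(X'). Then the map (α, β) ↦ (the function s ↦ α'φ(s) + β'(1,s')') restricted to {(α,β) : X'α = 0} has kernel determined by: if Φα + Xβ = 0 componentwise at the n control points and X'α = 0 then J = α'Φα = 0 forces α = 0 and then β is determined by the evaluations; consequently the n functions f_1,…,f_n of the proposed construction are linearly independent and span the natural TPS space F. -/

import Mathlib

open Matrix

theorem stmt19 (n d : ℕ) (hd : d + 1 < n) {E : Type*}
    (s : Fin n → E)
    (φ : Fin n → E → ℝ) (p : Fin (d + 1) → E → ℝ)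
    (Φ : Matrix (Fin n) (Fin n) ℝ) (hΦval : ∀ i j, Φ i j = φ j (s i))
    (hΦ : Φᵀ = Φ)
    (X : Matrix (Fin n) (Fin (d + 1)) ℝ) (hXval : ∀ i j, X i j = p j (s i))
    (hX : X.rank = d + 1)
    (hpos : ∀ α : Fin n → ℝ, α ≠ 0 → Xᵀ *ᵥ α = 0 → 0 < α ⬝ᵥ (Φ *ᵥ α))
    (Q : Matrix (Fin n) (Fin n) ℝ)
    (hQ : Q = 1 - X * (Xᵀ * X)⁻¹ * Xᵀ)
    (v : Fin (n - (d + 1)) → Fin n → ℝ)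
    (lam : Fin (n - (d + 1)) → ℝ) (hlam : ∀ j, 0 < lam j)
    (horth : ∀ j j', v j ⬝ᵥ v j' = if j = j' then 1 else 0)
    (heig : ∀ j, (Q * Φ * Q) *ᵥ v j = lam j • v j)
    (fs : Fin n → E → ℝ)
    (hfs : ∀ k : Fin n, fs k =
      if hk : (k : ℕ) < d + 1 then p ⟨k, hk⟩
      else fun e =>
        (lam ⟨(k : ℕ) - (d + 1), by omega⟩)⁻¹ *
          (((fun i => φ i e) -
              (Φᵀ * X * (Xᵀ * X)⁻¹) *ᵥ (fun j => p j e)) ⬝ᵥ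
            v ⟨(k : ℕ) - (d + 1), by omega⟩)) :
    (∀ (α : Fin n → ℝ) (β : Fin (d + 1) → ℝ), Xᵀ *ᵥ α = 0 →
        Φ *ᵥ α + X *ᵥ β = 0 → α = 0 ∧ β = 0) ∧
      LinearIndependent ℝ fs ∧
      (Submodule.span ℝ (Set.range fs) : Set (E → ℝ)) =
        {g : E → ℝ | ∃ (α : Fin n → ℝ) (β : Fin (d + 1) → ℝ),
          Xᵀ *ᵥ α = 0 ∧
          g = fun e => (∑ i, α i * φ i e) + ∑ j, β j * p j e} := by
  classical
  -- injectivity of X on mulVec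
  have hXinj : ∀ β : Fin (d + 1) → ℝ, X *ᵥ β = 0 → β = 0 := by
    have hker : LinearMap.ker X.mulVecLin = ⊥ := by
      have h1 := LinearMap.finrank_range_add_finrank_ker X.mulVecLin
      have h2 : Module.finrank ℝ (LinearMap.range X.mulVecLin) = d + 1 := hX
      have h3 : Module.finrank ℝ (Fin (d + 1) → ℝ) = d + 1 := by simp
      have h4 : Module.finrank ℝ (LinearMap.ker X.mulVecLin) = 0 := by omega
      exact Submodule.finrank_eq_zero.mp h4
    intro β hβ
    have : β ∈ LinearMap.ker X.mulVecLin := hβ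
    simpa [hker] using this
  -- part 1
  have part1 : ∀ (α : Fin n → ℝ) (β : Fin (d + 1) → ℝ), Xᵀ *ᵥ α = 0 →
      Φ *ᵥ α + X *ᵥ β = 0 → α = 0 ∧ β = 0 := by
    intro α β hα h
    have hdot : α ⬝ᵥ (X *ᵥ β) = 0 := by
      rw [dotProduct_mulVec, ← mulVec_transpose, hα, zero_dotProduct]
    have hα0 : α = 0 := by
      by_contra hne
      have hp := hpos α hne hα
      have h2 : α ⬝ᵥ (Φ *ᵥ α + X *ᵥ β) = 0 := by rw [h, dotProduct_zero]
      rw [dotProduct_add, hdot, add_zero] at h2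
      linarith
    refine ⟨hα0, ?_⟩
    apply hXinj
    have := h
    rw [hα0, mulVec_zero, zero_add] at this
    exact this
  -- X^T X is invertible
  have hdet : IsUnit (Xᵀ * X).det := by
    have hpd : (Xᵀ * X).PosDef := by
      refine Matrix.PosDef.of_dotProduct_mulVec_pos ?_ ?_
      · apply Matrix.IsHermitian.ext
        intro i j
        simp [Matrix.mul_apply, mul_comm, Matrix.transpose_apply]
      · intro x hx
        have h1 : star x ⬝ᵥ ((Xᵀ * X) *ᵥ x) = (X *ᵥ x) ⬝ᵥ (X *ᵥ x) := by
          rw [star_trivial, ← Matrix.mulVec_mulVec, dotProduct_mulVec, vecMul_transpose]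
        rw [h1]
        have hne : X *ᵥ x ≠ 0 := fun hXx => hx (hXinj x hXx)
        have h0 : (X *ᵥ x) ⬝ᵥ (X *ᵥ x) ≠ 0 := fun hz => hne (dotProduct_self_eq_zero.mp hz)
        have hnn : 0 ≤ (X *ᵥ x) ⬝ᵥ (X *ᵥ x) :=
          Finset.sum_nonneg fun i _ => mul_self_nonneg _
        exact lt_of_le_of_ne hnn (Ne.symm h0)
    exact hpd.det_pos.ne'.isUnit
  have hinv : (Xᵀ * X) * (Xᵀ * X)⁻¹ = 1 := Matrix.mul_nonsing_inv _ hdet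
  have hXQ : Xᵀ * Q = 0 := by
    rw [hQ, Matrix.mul_sub, Matrix.mul_one,
      show Xᵀ * (X * (Xᵀ * X)⁻¹ * Xᵀ) = (Xᵀ * X) * (Xᵀ * X)⁻¹ * Xᵀ by
        simp only [Matrix.mul_assoc],
      hinv, Matrix.one_mul, sub_self]
  have hXv : ∀ m, Xᵀ *ᵥ v m = 0 := by
    intro m
    have h1 : Xᵀ *ᵥ ((Q * Φ * Q) *ᵥ v m) = lam m • (Xᵀ *ᵥ v m) := by
      rw [heig, Matrix.mulVec_smul]
    have h2 : Xᵀ *ᵥ ((Q * Φ * Q) *ᵥ v m) = 0 := by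
      rw [Matrix.mulVec_mulVec,
        show Xᵀ * (Q * Φ * Q) = (Xᵀ * Q) * (Φ * Q) by
          simp only [Matrix.mul_assoc],
        hXQ, Matrix.zero_mul, Matrix.zero_mulVec]
    have h3 : lam m • (Xᵀ *ᵥ v m) = 0 := by rw [← h1, h2]
    rcases smul_eq_zero.mp h3 with h | h
    · exact absurd h (hlam m).ne'
    · exact h
  have hQv : ∀ m, Q *ᵥ v m = v m := by
    intro m
    rw [hQ, Matrix.sub_mulVec, Matrix.one_mulVec,
      show (X * (Xᵀ * X)⁻¹ * Xᵀ) *ᵥ v m = (X * (Xᵀ * X)⁻¹) *ᵥ (Xᵀ *ᵥ v m) by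
        rw [Matrix.mulVec_mulVec],
      hXv, Matrix.mulVec_zero, sub_zero]
  have hQΦv : ∀ m, (Q * Φ) *ᵥ v m = lam m • v m := by
    intro m
    calc (Q * Φ) *ᵥ v m = (Q * Φ) *ᵥ (Q *ᵥ v m) := by rw [hQv]
      _ = (Q * Φ * Q) *ᵥ v m := by rw [Matrix.mulVec_mulVec]
      _ = lam m • v m := heig m
  -- notation: equivalence splitting Fin n
  let eqv : (Fin (d + 1) ⊕ Fin (n - (d + 1))) ≃ Fin n :=
    finSumFinEquiv.trans (finCongr (by omega))
  have heqv1 : ∀ j : Fin (d + 1), ((eqv (Sum.inl j) : Fin n) : ℕ) = (j : ℕ) := by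
    intro j; simp [eqv]
  have heqv2 : ∀ m : Fin (n - (d + 1)),
      ((eqv (Sum.inr m) : Fin n) : ℕ) = d + 1 + (m : ℕ) := by
    intro m; simp [eqv]
  -- the coefficient vectors w
  set w : Fin (n - (d + 1)) → Fin (d + 1) → ℝ :=
    fun m => ((Xᵀ * X)⁻¹ * (Xᵀ * Φ)) *ᵥ v m with hw
  have hfs1 : ∀ j : Fin (d + 1), fs (eqv (Sum.inl j)) = p j := by
    intro j
    rw [hfs, dif_pos (by rw [heqv1]; exact j.isLt)]
    exact congrArg p (Fin.ext (heqv1 j))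
  have hMT : (Φᵀ * X * (Xᵀ * X)⁻¹)ᵀ = (Xᵀ * X)⁻¹ * (Xᵀ * Φ) := by
    rw [Matrix.transpose_mul, Matrix.transpose_mul, Matrix.transpose_transpose,
      Matrix.transpose_nonsing_inv,
      Matrix.transpose_mul, Matrix.transpose_transpose]
  have hfs2 : ∀ m : Fin (n - (d + 1)), fs (eqv (Sum.inr m)) =
      fun e => (lam m)⁻¹ * ((∑ i, v m i * φ i e) - ∑ j, w m j * p j e) := by
    intro m
    rw [hfs, dif_neg (by rw [heqv2]; omega)]
    have hidx : ∀ h : ((eqv (Sum.inr m) : Fin n) : ℕ) - (d + 1) < n - (d + 1),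
        (⟨((eqv (Sum.inr m) : Fin n) : ℕ) - (d + 1), h⟩ : Fin (n - (d + 1))) = m := by
      intro h
      apply Fin.ext
      show ((eqv (Sum.inr m) : Fin n) : ℕ) - (d + 1) = (m : ℕ)
      rw [heqv2]; omega
    rw [hidx]
    funext e
    congr 1
    rw [sub_dotProduct]
    congr 1
    · exact Finset.sum_congr rfl fun i _ => mul_comm _ _
    · rw [dotProduct_comm, dotProduct_mulVec, ← mulVec_transpose, hMT]
      rfl
  -- evaluation at the control points
  have heval2 : ∀ (m : Fin (n - (d + 1))) (i : Fin n),
      fs (eqv (Sum.inr m)) (s i) = v m i := by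
    intro m i
    simp only [hfs2]
    have h1 : (∑ a, v m a * φ a (s i)) = (Φ *ᵥ v m) i := by
      rw [Matrix.mulVec, dotProduct]
      exact Finset.sum_congr rfl fun a _ => by rw [hΦval, mul_comm]
    have h2 : (∑ j, w m j * p j (s i)) = (X *ᵥ w m) i := by
      rw [Matrix.mulVec, dotProduct]
      exact Finset.sum_congr rfl fun a _ => by rw [hXval, mul_comm]
    have h3 : Φ *ᵥ v m - X *ᵥ w m = lam m • v m := by
      have h4 : X *ᵥ w m = (X * ((Xᵀ * X)⁻¹ * (Xᵀ * Φ))) *ᵥ v m := by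
        rw [hw, Matrix.mulVec_mulVec]
      have h5 : Q * Φ = Φ - X * ((Xᵀ * X)⁻¹ * (Xᵀ * Φ)) := by
        rw [hQ, Matrix.sub_mul, Matrix.one_mul]
        simp only [Matrix.mul_assoc]
      rw [h4, ← Matrix.sub_mulVec, ← h5, hQΦv]
    have h6 : (∑ a, v m a * φ a (s i)) - (∑ j, w m j * p j (s i))
        = lam m * v m i := by
      rw [h1, h2]
      have := congrFun h3 i
      simpa using this
    rw [h6, ← mul_assoc, inv_mul_cancel₀ (hlam m).ne', one_mul]
  have hsumdot : ∀ {ι : Type} [Fintype ι] (a : ι → ℝ) (vv : ι → Fin n → ℝ) (u : Fin n → ℝ),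
      (∑ m, a m • vv m) ⬝ᵥ u = ∑ m, a m * (vv m ⬝ᵥ u) := by
    intro ι _ a vv u
    simp only [dotProduct, Finset.sum_apply, Pi.smul_apply, smul_eq_mul,
      Finset.sum_mul, Finset.mul_sum, mul_assoc]
    rw [Finset.sum_comm]
  -- linear independence
  have hindep : LinearIndependent ℝ fs := by
    rw [Fintype.linearIndependent_iff]
    intro c hc
    set b : Fin (d + 1) → ℝ := fun j => c (eqv (Sum.inl j)) with hb
    set a : Fin (n - (d + 1)) → ℝ := fun m => c (eqv (Sum.inr m)) with ha
    have hpt : ∀ i : Fin n,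
        (X *ᵥ b) i + (∑ m, a m • v m) i = 0 := by
      intro i
      have h0 := congrFun hc (s i)
      rw [Finset.sum_apply, Pi.zero_apply] at h0
      rw [← Equiv.sum_comp eqv (fun k => (c k • fs k) (s i)), Fintype.sum_sum_type] at h0
      have h1 : ∀ j : Fin (d + 1),
          (c (eqv (Sum.inl j)) • fs (eqv (Sum.inl j))) (s i) = X i j * b j := by
        intro j; rw [Pi.smul_apply, smul_eq_mul, hfs1, ← hXval, mul_comm]
      have h2 : ∀ m, (c (eqv (Sum.inr m)) • fs (eqv (Sum.inr m))) (s i)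
          = a m * v m i := by
        intro m; rw [Pi.smul_apply, smul_eq_mul, heval2]
      rw [Finset.sum_congr rfl (fun j _ => h1 j), Finset.sum_congr rfl (fun m _ => h2 m)] at h0
      rw [Finset.sum_apply]
      simpa [Matrix.mulVec, dotProduct] using h0
    have hvec : X *ᵥ b + ∑ m, a m • v m = 0 := funext hpt
    have hA : ∀ m', a m' = 0 := by
      intro m'
      have h3 := congrArg (fun y => y ⬝ᵥ v m') hvec
      simp only [add_dotProduct, zero_dotProduct] at h3
      have h4 : (X *ᵥ b) ⬝ᵥ v m' = 0 := by
        rw [dotProduct_comm, dotProduct_mulVec, ← mulVec_transpose, hXv,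
          zero_dotProduct]
      have h5 : (∑ m, a m • v m) ⬝ᵥ v m' = a m' := by
        rw [hsumdot]
        simp [horth, mul_ite, Finset.sum_ite_eq']
      rw [h4, h5, zero_add] at h3
      exact h3
    have hB : b = 0 := by
      apply hXinj
      have : (∑ m, a m • v m) = 0 := by
        simp only [funext hA]; simp
      rw [this, add_zero] at hvec
      exact hvec
    intro k
    obtain ⟨x, rfl⟩ := eqv.surjective k
    cases x with
    | inl j => exact congrFun hB j
    | inr m => exact hA m
  -- the linear map T and submodule S
  let T : ((Fin n → ℝ) × (Fin (d + 1) → ℝ)) →ₗ[ℝ] (E → ℝ) :=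
    { toFun := fun x => fun e => (∑ i, x.1 i * φ i e) + ∑ j, x.2 j * p j e
      map_add' := by
        intro x y; funext e
        simp only [Prod.fst_add, Prod.snd_add, Pi.add_apply, add_mul,
          Finset.sum_add_distrib]
        ring
      map_smul' := by
        intro cc x; funext e
        simp only [Prod.smul_fst, Prod.smul_snd, Pi.smul_apply, smul_eq_mul,
          RingHom.id_apply, Finset.mul_sum, mul_add, mul_assoc] }
  let S : Submodule ℝ ((Fin n → ℝ) × (Fin (d + 1) → ℝ)) :=
    LinearMap.ker ((Xᵀ.mulVecLin).comp (LinearMap.fst ℝ (Fin n → ℝ) (Fin (d + 1) → ℝ)))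
  have hSmem : ∀ x : (Fin n → ℝ) × (Fin (d + 1) → ℝ), x ∈ S ↔ Xᵀ *ᵥ x.1 = 0 := by
    intro x
    simp [S, LinearMap.mem_ker, ← mulVec_transpose]
  have hTval : ∀ (α : Fin n → ℝ) (β : Fin (d + 1) → ℝ),
      T (α, β) = fun e => (∑ i, α i * φ i e) + ∑ j, β j * p j e := fun _ _ => rfl
  have hp_mem : ∀ β' : Fin (d + 1) → ℝ,
      T (0, β') ∈ Submodule.span ℝ (Set.range fs) := by
    intro β'
    have hrepr : T (0, β') = ∑ j, β' j • fs (eqv (Sum.inl j)) := by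
      funext e
      rw [hTval, Finset.sum_apply]
      simp [hfs1]
    rw [hrepr]
    exact Submodule.sum_mem _ fun j _ =>
      Submodule.smul_mem _ _ (Submodule.subset_span ⟨_, rfl⟩)
  have hv_mem : ∀ m, T (v m, 0) ∈ Submodule.span ℝ (Set.range fs) := by
    intro m
    have hrepr : T (v m, 0) = lam m • fs (eqv (Sum.inr m)) + T (0, w m) := by
      rw [hfs2, hTval, hTval]
      funext e
      simp only [Pi.add_apply, Pi.smul_apply, smul_eq_mul, Pi.zero_apply, zero_mul,
        Finset.sum_const_zero, add_zero, zero_add]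
      rw [← mul_assoc, mul_inv_cancel₀ (hlam m).ne', one_mul]
      ring
    rw [hrepr]
    exact add_mem (Submodule.smul_mem _ _ (Submodule.subset_span ⟨_, rfl⟩)) (hp_mem _)
  -- the span of the v's is the kernel of Xᵀ
  have hvind : LinearIndependent ℝ v := by
    rw [Fintype.linearIndependent_iff]
    intro g hg m
    have h3 := congrArg (fun y => y ⬝ᵥ v m) hg
    simpa [hsumdot, horth, mul_ite, Finset.sum_ite_eq'] using h3
  have hKr : Module.finrank ℝ (LinearMap.ker (Xᵀ.mulVecLin)) = n - (d + 1) := by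
    have h1 := LinearMap.finrank_range_add_finrank_ker (Xᵀ.mulVecLin)
    have h2 : Module.finrank ℝ (LinearMap.range (Xᵀ.mulVecLin)) = d + 1 := by
      have := X.rank_transpose
      rw [hX] at this
      exact this
    have h3 : Module.finrank ℝ (Fin n → ℝ) = n := by simp
    omega
  have hαspan : ∀ α : Fin n → ℝ, Xᵀ *ᵥ α = 0 →
      ∃ γ : Fin (n - (d + 1)) → ℝ, ∑ m, γ m • v m = α := by
    intro α hα
    set Kr := LinearMap.ker (Xᵀ.mulVecLin) with hKrdef
    have hvK : ∀ m, v m ∈ Kr := fun m => by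
      simp only [hKrdef, LinearMap.mem_ker, Matrix.mulVecLin_apply]
      exact hXv m
    set v' : Fin (n - (d + 1)) → Kr := fun m => ⟨v m, hvK m⟩ with hv'
    have hv'ind : LinearIndependent ℝ v' := by
      apply LinearIndependent.of_comp Kr.subtype
      exact hvind
    have hne : Nonempty (Fin (n - (d + 1))) := ⟨⟨0, by omega⟩⟩
    have htop : Submodule.span ℝ (Set.range v') = ⊤ :=
      hv'ind.span_eq_top_of_card_eq_finrank (by simp [hKr])
    have hαK : α ∈ Kr := by
      rw [hKrdef, LinearMap.mem_ker, Matrix.mulVecLin_apply]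
      exact hα
    have hmem : (⟨α, hαK⟩ : Kr) ∈ Submodule.span ℝ (Set.range v') := by
      rw [htop]; trivial
    obtain ⟨γ, hγ⟩ := (Submodule.mem_span_range_iff_exists_fun ℝ).mp hmem
    refine ⟨γ, ?_⟩
    have := congrArg (Subtype.val) hγ
    simpa using this
  -- span equality (as submodules, then sets)
  have hspan : Submodule.span ℝ (Set.range fs) = Submodule.map T S := by
    apply le_antisymm
    · rw [Submodule.span_le]
      rintro g ⟨k, rfl⟩
      obtain ⟨x, rfl⟩ := eqv.surjective k
      cases x with
      | inl j =>
        refine ⟨(0, Pi.single j 1), (hSmem _).mpr (by simp), ?_⟩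
        rw [hfs1, hTval]
        funext e
        simp [Pi.single_apply, ite_mul]
      | inr m =>
        refine ⟨((lam m)⁻¹ • v m, -((lam m)⁻¹ • w m)),
          (hSmem _).mpr (by simp [Matrix.mulVec_smul, hXv]), ?_⟩
        rw [hfs2, hTval]
        funext e
        simp only [Pi.smul_apply, Pi.neg_apply, smul_eq_mul, neg_mul, mul_sub,
          Finset.mul_sum, mul_assoc, Finset.sum_neg_distrib, sub_eq_add_neg]
        rw [mul_add, mul_neg, Finset.mul_sum, Finset.mul_sum]
    · rintro g ⟨⟨α, β⟩, hαS, rfl⟩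
      replace hαS : Xᵀ *ᵥ α = 0 := (hSmem _).mp hαS
      obtain ⟨γ, hγ⟩ := hαspan α hαS
      have hsplit : T (α, β) = T (α, 0) + T (0, β) := by
        rw [← map_add]
        congr 1
        simp
      have hα0 : T (α, 0) = ∑ m, γ m • T (v m, 0) := by
        rw [← hγ]
        have : ((∑ m, γ m • v m : Fin n → ℝ), (0 : Fin (d + 1) → ℝ))
            = ∑ m, γ m • ((v m, 0) : (Fin n → ℝ) × (Fin (d + 1) → ℝ)) := by
          rw [Prod.ext_iff, Prod.fst_sum, Prod.snd_sum]
          constructor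
          · simp
          · simp
        rw [this, map_sum]
        simp only [_root_.map_smul]
      rw [hsplit, hα0]
      exact add_mem (Submodule.sum_mem _ fun m _ => Submodule.smul_mem _ _ (hv_mem m))
        (hp_mem β)
  refine ⟨part1, hindep, ?_⟩
  rw [hspan]
  ext g
  simp only [SetLike.mem_coe, Submodule.mem_map, Set.mem_setOf_eq]
  constructor
  · rintro ⟨⟨α, β⟩, h1, rfl⟩
    exact ⟨α, β, (hSmem _).mp h1, rfl⟩
  · rintro ⟨α, β, h1, rfl⟩
    exact ⟨(α, β), (hSmem _).mpr h1, rfl⟩
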